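/- Let X follow a d-dimensional Student t distribution with mean 0, positive-definite dispersion matrix Σ, and ν degrees of freedom, i.e. density f_X(x) = k (1 + x^T Σ^{-1} x/ν)^{−(ν+d)/2}. Then f_X(tx)/f_X(t·1) → v(x)/v(1) with v(x) = (x^T Σ^{-1} x)^{−(ν+d)/2}, the function v is integrable on C = {x : ‖x‖_∞ ≥ 1}, and the conditional density of X/t given ‖X‖_∞ ≥ t converges pointwise to f_Y(y) = v(y)/∫_C v; in particular X is multivariate regularly varying of index −ν with homogeneous limiting density f_Y of order −ν−d. -/

import Mathlib

set_option maxHeartbeats 1000000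

open Filter Topology MeasureTheory

noncomputable def qf {d : ℕ} (S : Matrix (Fin d) (Fin d) ℝ) (x : Fin d → ℝ) : ℝ :=
  dotProduct x (S⁻¹.mulVec x)

lemma qf_pos {d : ℕ} {S : Matrix (Fin d) (Fin d) ℝ} (hS : S.PosDef) {x : Fin d → ℝ}
    (hx : x ≠ 0) : 0 < qf S x := by
  have := hS.inv.dotProduct_mulVec_pos hx
  simpa [qf] using this

lemma qf_nonneg {d : ℕ} {S : Matrix (Fin d) (Fin d) ℝ} (hS : S.PosDef) (x : Fin d → ℝ) :
    0 ≤ qf S x := by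
  have := hS.inv.posSemidef.dotProduct_mulVec_nonneg x
  simpa [qf] using this

lemma qf_smul {d : ℕ} (S : Matrix (Fin d) (Fin d) ℝ) (t : ℝ) (x : Fin d → ℝ) :
    qf S (t • x) = t ^ 2 * qf S x := by
  simp only [qf, Matrix.mulVec_smul, dotProduct_smul, smul_dotProduct,
    smul_eq_mul]
  ring

lemma qf_continuous {d : ℕ} (S : Matrix (Fin d) (Fin d) ℝ) : Continuous (qf S) := by
  unfold qf dotProduct Matrix.mulVec
  exact continuous_finset_sum _ fun i _ => (continuous_apply i).mul
    (continuous_finset_sum _ fun j _ => continuous_const.mul (continuous_apply j))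

lemma qf_lower {d : ℕ} (hd : 0 < d) {S : Matrix (Fin d) (Fin d) ℝ} (hS : S.PosDef) :
    ∃ c > 0, ∀ x : Fin d → ℝ, c * ‖x‖ ^ 2 ≤ qf S x := by
  haveI : Nonempty (Fin d) := ⟨⟨0, hd⟩⟩
  have hne : (Metric.sphere (0 : Fin d → ℝ) 1).Nonempty := by
    refine ⟨(1 : Fin d → ℝ), ?_⟩
    simp [mem_sphere_zero_iff_norm]
  obtain ⟨u, hu, humin⟩ := (isCompact_sphere (0 : Fin d → ℝ) 1).exists_isMinOn hne
    (qf_continuous S).continuousOn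
  rw [mem_sphere_zero_iff_norm] at hu
  have hu0 : u ≠ 0 := by intro h; rw [h] at hu; simp at hu
  refine ⟨qf S u, qf_pos hS hu0, fun x => ?_⟩
  rcases eq_or_ne x 0 with rfl | hx
  · simp [qf]
  · have hnx : 0 < ‖x‖ := norm_pos_iff.mpr hx
    have hmem : ‖x‖⁻¹ • x ∈ Metric.sphere (0 : Fin d → ℝ) 1 := by
      rw [mem_sphere_zero_iff_norm, norm_smul, norm_inv, norm_norm,
        inv_mul_cancel₀ hnx.ne']
    have hxe : x = ‖x‖ • (‖x‖⁻¹ • x) := by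
      rw [smul_smul, mul_inv_cancel₀ hnx.ne', one_smul]
    have : qf S x = ‖x‖ ^ 2 * qf S (‖x‖⁻¹ • x) := by
      conv_lhs => rw [hxe]
      rw [qf_smul]
    rw [this, mul_comm (qf S u)]
    exact mul_le_mul_of_nonneg_left (humin hmem) (by positivity)

theorem student_limiting_density {d : ℕ} (hd : 0 < d)
    (ν k : ℝ) (hν : 0 < ν) (hk : 0 < k)
    (S : Matrix (Fin d) (Fin d) ℝ) (hS : S.PosDef)
    (fX : (Fin d → ℝ) → ℝ)
    (hfX : ∀ x, fX x = k * (1 + dotProduct x (S⁻¹.mulVec x) / ν) ^ (-(ν + d) / 2))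
    (v : (Fin d → ℝ) → ℝ)
    (hv : ∀ x, v x = dotProduct x (S⁻¹.mulVec x) ^ (-(ν + d) / 2))
    (C : Set (Fin d → ℝ)) (hC : C = {x | 1 ≤ ‖x‖}) :
    (∀ x : Fin d → ℝ, x ≠ 0 →
      Tendsto (fun t : ℝ => fX (t • x) / fX (t • (1 : Fin d → ℝ))) atTop
        (𝓝 (v x / v 1))) ∧
    IntegrableOn v C ∧
    (∀ y ∈ C,
      Tendsto (fun t : ℝ => fX (t • y) / ∫ x in C, fX (t • x)) atTop
        (𝓝 (v y / ∫ x in C, v x))) ∧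
    (∀ lam : ℝ, 1 ≤ lam → ∀ y ∈ C,
      v (lam • y) / ∫ x in C, v x =
        lam ^ (-ν - d) * (v y / ∫ x in C, v x)) ∧
    (∀ B : Set (Fin d → ℝ), B ⊆ C → MeasurableSet B →
      Tendsto (fun t : ℝ => (∫ x in B, fX (t • x)) / ∫ x in C, fX (t • x)) atTop
        (𝓝 (∫ x in B, v x / ∫ x' in C, v x'))) := by
  haveI : Nonempty (Fin d) := ⟨⟨0, hd⟩⟩
  set e : ℝ := -(ν + d) / 2 with he_def
  have hνd : (0:ℝ) < ν + d := by positivity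
  have he_neg : e < 0 := by rw [he_def]; linarith
  have hfX' : ∀ x, fX x = k * (1 + qf S x / ν) ^ e := hfX
  have hv' : ∀ x, v x = qf S x ^ e := hv
  have hq_pos : ∀ x : Fin d → ℝ, x ≠ 0 → 0 < qf S x := fun x hx => qf_pos hS hx
  have hq_nonneg := qf_nonneg hS
  obtain ⟨c, hc, hlow⟩ := qf_lower hd hS
  have hCmeas : MeasurableSet C := by
    rw [hC]; exact (isClosed_le continuous_const continuous_norm).measurableSet
  have hCne : ∀ x ∈ C, x ≠ 0 := by
    intro x hx h0
    rw [hC] at hx; rw [h0] at hx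
    simp only [Set.mem_setOf_eq, norm_zero] at hx
    linarith
  have hv_pos : ∀ x ∈ C, 0 < v x := fun x hx => by
    rw [hv']; exact Real.rpow_pos_of_pos (hq_pos x (hCne x hx)) e
  have hv_meas : Measurable v := by
    have : v = fun x => qf S x ^ e := funext hv'
    rw [this]
    exact (qf_continuous S).measurable.pow measurable_const
  -- Integrability of v on C
  have hfr : (Module.finrank ℝ (Fin d → ℝ) : ℝ) < ν + d := by
    rw [Module.finrank_fintype_fun_eq_card, Fintype.card_fin]; linarith
  have hint0 : Integrable (fun x : Fin d → ℝ => (1 + ‖x‖) ^ (-(ν + d))) :=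
    integrable_one_add_norm hfr
  have hvC : IntegrableOn v C := by
    refine ((hint0.const_mul (c ^ e * 2 ^ (ν + d))).integrableOn).mono'
      hv_meas.aestronglyMeasurable.restrict ?_
    rw [ae_restrict_iff' hCmeas]
    refine Filter.Eventually.of_forall fun x hx => ?_
    rw [hC] at hx
    have hx1 : 1 ≤ ‖x‖ := hx
    have hnx : (0:ℝ) < ‖x‖ := lt_of_lt_of_le one_pos hx1
    have hqx : 0 < qf S x := hq_pos x (by intro h; rw [h] at hnx; simp at hnx)
    have h1 : ‖v x‖ = qf S x ^ e := by
      rw [hv', Real.norm_eq_abs, abs_of_pos (Real.rpow_pos_of_pos hqx e)]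
    have h2 : qf S x ^ e ≤ (c * ‖x‖ ^ 2) ^ e :=
      Real.rpow_le_rpow_of_nonpos (by positivity) (hlow x) he_neg.le
    have h3 : (c * ‖x‖ ^ 2) ^ e = c ^ e * ‖x‖ ^ (-(ν + d)) := by
      rw [Real.mul_rpow hc.le (by positivity), ← Real.rpow_natCast ‖x‖ 2,
        ← Real.rpow_mul (norm_nonneg x)]
      congr 1
      rw [he_def]; push_cast; ring
    have h4 : ‖x‖ ^ (-(ν + d)) ≤ ((1 + ‖x‖) / 2) ^ (-(ν + d)) :=
      Real.rpow_le_rpow_of_nonpos (by positivity) (by linarith) (by linarith)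
    have h5 : ((1 + ‖x‖) / 2) ^ (-(ν + d)) = 2 ^ (ν + d) * (1 + ‖x‖) ^ (-(ν + d)) := by
      rw [Real.div_rpow (by positivity) (by norm_num), Real.rpow_neg (by norm_num : (0:ℝ) ≤ 2),
        div_eq_mul_inv, inv_inv, mul_comm]
    rw [h1]
    calc qf S x ^ e ≤ (c * ‖x‖ ^ 2) ^ e := h2
      _ = c ^ e * ‖x‖ ^ (-(ν + d)) := h3
      _ ≤ c ^ e * (((1 + ‖x‖) / 2) ^ (-(ν + d))) :=
          mul_le_mul_of_nonneg_left h4 (Real.rpow_nonneg hc.le e)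
      _ = c ^ e * 2 ^ (ν + d) * (1 + ‖x‖) ^ (-(ν + d)) := by rw [h5]; ring
  -- positivity of ∫_C v
  have hIpos : 0 < ∫ x in C, v x := by
    have hnn : 0 ≤ᵐ[volume.restrict C] v := by
      filter_upwards [ae_restrict_mem hCmeas] with x hx
      exact (hv_pos x hx).le
    rw [setIntegral_pos_iff_support_of_nonneg_ae hnn hvC]
    refine lt_of_lt_of_le (Metric.measure_ball_pos volume (fun _ => (2:ℝ)) one_pos) (measure_mono ?_)
    intro x hx
    have hd2 : dist x (fun _ => (2:ℝ)) < 1 := Metric.mem_ball.mp hx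
    have hn2 : ‖(fun _ => (2:ℝ) : Fin d → ℝ)‖ = 2 := by
      rw [pi_norm_const]; norm_num
    have hx1 : 1 ≤ ‖x‖ := by
      have h := norm_sub_norm_le ((fun _ => (2:ℝ)) : Fin d → ℝ) x
      rw [hn2] at h
      have hd' : ‖(fun _ => (2:ℝ) : Fin d → ℝ) - x‖ = dist x (fun _ => (2:ℝ)) := by
        rw [dist_eq_norm, norm_sub_rev]
      linarith [hd'.symm ▸ h]
    have hxC : x ∈ C := by rw [hC]; exact hx1
    exact ⟨Function.mem_support.mpr (hv_pos x hxC).ne', hxC⟩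
  -- the rescaled density
  set c0 : ℝ := k * ν ^ ((ν + (d:ℝ)) / 2) with hc0_def
  have hc0 : 0 < c0 := by
    rw [hc0_def]; exact mul_pos hk (Real.rpow_pos_of_pos hν _)
  set F : ℝ → (Fin d → ℝ) → ℝ := fun t x => k * ((t ^ 2)⁻¹ + qf S x / ν) ^ e with hF_def
  have hbase_pos : ∀ (t : ℝ) (x : Fin d → ℝ), 0 < t → 0 < (t ^ 2)⁻¹ + qf S x / ν := by
    intro t x ht
    have := hq_nonneg x
    positivity
  have key : ∀ t : ℝ, 0 < t → ∀ x, t ^ (ν + (d:ℝ)) * fX (t • x) = F t x := by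
    intro t ht x
    have ht2 : (0:ℝ) < t ^ 2 := by positivity
    rw [hfX', qf_smul]
    have hb : 1 + t ^ 2 * qf S x / ν = t ^ 2 * ((t ^ 2)⁻¹ + qf S x / ν) := by
      field_simp
    rw [hb, Real.mul_rpow ht2.le (hbase_pos t x ht).le]
    have hpow : t ^ (ν + (d:ℝ)) * (t ^ 2 : ℝ) ^ e = 1 := by
      rw [← Real.rpow_natCast t 2, ← Real.rpow_mul ht.le, ← Real.rpow_add ht]
      have : ν + (d:ℝ) + ((2:ℕ):ℝ) * e = 0 := by rw [he_def]; push_cast; ring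
      rw [this, Real.rpow_zero]
    calc t ^ (ν + (d:ℝ)) * (k * ((t ^ 2 : ℝ) ^ e * ((t ^ 2)⁻¹ + qf S x / ν) ^ e))
        = (t ^ (ν + (d:ℝ)) * (t ^ 2 : ℝ) ^ e) * (k * ((t ^ 2)⁻¹ + qf S x / ν) ^ e) := by ring
      _ = F t x := by rw [hpow, one_mul]
  have hclim : ∀ x : Fin d → ℝ, x ≠ 0 → k * (qf S x / ν) ^ e = c0 * v x := by
    intro x hx
    have hqx := hq_pos x hx
    rw [hv', Real.div_rpow hqx.le hν.le, hc0_def,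
      show (ν + (d:ℝ)) / 2 = -e by rw [he_def]; ring, Real.rpow_neg hν.le]
    field_simp
  have hF_lim : ∀ x : Fin d → ℝ, x ≠ 0 → Tendsto (fun t => F t x) atTop (𝓝 (c0 * v x)) := by
    intro x hx
    have hqx := hq_pos x hx
    have h1 : Tendsto (fun t : ℝ => (t ^ 2)⁻¹ + qf S x / ν) atTop (𝓝 (0 + qf S x / ν)) :=
      (tendsto_pow_atTop (by norm_num : (2:ℕ) ≠ 0)).inv_tendsto_atTop.add tendsto_const_nhds
    rw [zero_add] at h1
    have h2 := (h1.rpow_const (p := e) (Or.inl (div_pos hqx hν).ne')).const_mul k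
    rw [hclim x hx] at h2
    exact h2
  have hF_bound : ∀ t : ℝ, 1 ≤ t → ∀ x ∈ C, ‖F t x‖ ≤ c0 * v x := by
    intro t ht x hx
    have ht0 : (0:ℝ) < t := lt_of_lt_of_le one_pos ht
    have hqx := hq_pos x (hCne x hx)
    have hFpos : 0 < F t x := by
      rw [hF_def]
      exact mul_pos hk (Real.rpow_pos_of_pos (hbase_pos t x ht0) e)
    rw [Real.norm_eq_abs, abs_of_pos hFpos, ← hclim x (hCne x hx)]
    have : (qf S x / ν) ^ e ≥ ((t ^ 2)⁻¹ + qf S x / ν) ^ e :=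
      Real.rpow_le_rpow_of_nonpos (div_pos hqx hν)
        (le_add_of_nonneg_left (by positivity)) he_neg.le
    exact mul_le_mul_of_nonneg_left this hk.le
  have hF_meas : ∀ t : ℝ, Measurable (F t) := by
    intro t
    exact ((((qf_continuous S).measurable.div_const ν).const_add
      ((t ^ 2)⁻¹)).pow measurable_const).const_mul k
  have hTendInt : ∀ B : Set (Fin d → ℝ), B ⊆ C → MeasurableSet B →
      Tendsto (fun t : ℝ => ∫ x in B, F t x) atTop (𝓝 (c0 * ∫ x in B, v x)) := by
    intro B hB hBm
    have := tendsto_integral_filter_of_dominated_convergence (μ := volume.restrict B)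
      (F := fun t x => F t x) (f := fun x => c0 * v x) (bound := fun x => c0 * v x)
      (Filter.Eventually.of_forall fun t => (hF_meas t).aestronglyMeasurable)
      (by
        filter_upwards [eventually_ge_atTop (1:ℝ)] with t ht
        rw [ae_restrict_iff' hBm]
        exact Filter.Eventually.of_forall fun x hx => hF_bound t ht x (hB hx))
      ((hvC.mono_set hB).const_mul c0)
      (by
        rw [ae_restrict_iff' hBm]
        exact Filter.Eventually.of_forall fun x hx => hF_lim x (hCne x (hB hx)))
    rwa [integral_const_mul] at this
  have eqInt : ∀ (B : Set (Fin d → ℝ)) (t : ℝ), 0 < t →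
      ∫ x in B, F t x = t ^ (ν + (d:ℝ)) * ∫ x in B, fX (t • x) := by
    intro B t ht
    have : (fun x => F t x) = fun x => t ^ (ν + (d:ℝ)) * fX (t • x) :=
      funext fun x => (key t ht x).symm
    rw [this, integral_const_mul]
  have hIC : Tendsto (fun t : ℝ => ∫ x in C, F t x) atTop (𝓝 (c0 * ∫ x in C, v x)) :=
    hTendInt C subset_rfl hCmeas
  have hICne : c0 * ∫ x in C, v x ≠ 0 := (mul_pos hc0 hIpos).ne'
  refine ⟨?_, hvC, ?_, ?_, ?_⟩
  · -- Part 1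
    intro x hx
    have h1ne : (1 : Fin d → ℝ) ≠ 0 := by
      intro h
      have := congrFun h ⟨0, hd⟩
      norm_num at this
    have hv1 : 0 < v 1 := by
      rw [hv']; exact Real.rpow_pos_of_pos (hq_pos 1 h1ne) e
    have h := (hF_lim x hx).div (hF_lim 1 h1ne) (mul_pos hc0 hv1).ne'
    rw [mul_div_mul_left _ _ hc0.ne'] at h
    refine h.congr' ?_
    filter_upwards [eventually_gt_atTop (0:ℝ)] with t ht
    simp only [Pi.div_apply]
    rw [← key t ht x, ← key t ht 1,
      mul_div_mul_left _ _ (Real.rpow_pos_of_pos ht _).ne']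
  · -- Part 3
    intro y hy
    have h := (hF_lim y (hCne y hy)).div hIC hICne
    rw [mul_div_mul_left _ _ hc0.ne'] at h
    refine h.congr' ?_
    filter_upwards [eventually_gt_atTop (0:ℝ)] with t ht
    simp only [Pi.div_apply]
    rw [← key t ht y, eqInt C t ht,
      mul_div_mul_left _ _ (Real.rpow_pos_of_pos ht _).ne']
  · -- Part 4
    intro lam hlam y hy
    have hl : (0:ℝ) < lam := lt_of_lt_of_le one_pos hlam
    rw [hv' (lam • y), hv' y, qf_smul,
      Real.mul_rpow (by positivity) (hq_nonneg y),
      ← Real.rpow_natCast lam 2, ← Real.rpow_mul hl.le,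
      show ((2:ℕ):ℝ) * e = -ν - d by rw [he_def]; push_cast; ring,
      mul_div_assoc]
  · -- Part 5
    intro B hB hBm
    have h := (hTendInt B hB hBm).div hIC hICne
    rw [mul_div_mul_left _ _ hc0.ne'] at h
    rw [integral_div]
    refine h.congr' ?_
    filter_upwards [eventually_gt_atTop (0:ℝ)] with t ht
    simp only [Pi.div_apply]
    rw [eqInt B t ht, eqInt C t ht,
      mul_div_mul_left _ _ (Real.rpow_pos_of_pos ht _).ne']
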